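/- Let R and S be solid invertible (d+1)×(d+1) matrices over F. Then R and S are diagonally equivalent if and only if there exists an invertible matrix U such that U Δ_{ii} U^{-1} = Δ_{ii} and U (R Δ_{ii} R^{-1}) U^{-1} = S Δ_{ii} S^{-1} for all 0 ≤ i ≤ d. -/

import Mathlib

open Matrix

/-- An invertible matrix is *solid* whenever all entries in row 0 and column 0
of both the matrix and its inverse are nonzero. -/
def Solid {F : Type} [Field F] {d : ℕ} (R : Matrix (Fin (d+1)) (Fin (d+1)) F) : Prop :=
  IsUnit R ∧ (∀ i, R i 0 ≠ 0) ∧ (∀ j, R 0 j ≠ 0) ∧ (∀ i, R⁻¹ i 0 ≠ 0) ∧ (∀ j, R⁻¹ 0 j ≠ 0)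

/-- Matrices `S`, `T` are *diagonally equivalent* whenever `T = H * S * K` for some
invertible diagonal matrices `H`, `K`. -/
def DiagEquiv {F : Type} [Field F] {d : ℕ} (S T : Matrix (Fin (d+1)) (Fin (d+1)) F) : Prop :=
  ∃ H K : Matrix (Fin (d+1)) (Fin (d+1)) F,
    H.IsDiag ∧ IsUnit H ∧ K.IsDiag ∧ IsUnit K ∧ T = H * S * K

/-- A matrix is *normalized* whenever all entries of its column 0 equal 1, and all
entries of column 0 of its inverse are equal to each other. -/
def Normalized {F : Type} [Field F] {d : ℕ} (S : Matrix (Fin (d+1)) (Fin (d+1)) F) : Prop :=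
  (∀ i, S i 0 = 1) ∧ (∀ i, S⁻¹ i 0 = S⁻¹ 0 0)

section Helpers

variable {F : Type} [Field F] {n : ℕ}

lemma std_eq_diag (i : Fin (n+1)) :
    single i i (1:F) = diagonal (fun j => if j = i then 1 else 0) := by
  ext j k
  simp only [single, diagonal, Matrix.of_apply]
  by_cases h1 : j = k <;> by_cases h2 : i = j <;> simp_all [eq_comm]

lemma commute_delta_of_isDiag {M : Matrix (Fin (n+1)) (Fin (n+1)) F} (h : M.IsDiag)
    (i : Fin (n+1)) : M * single i i 1 = single i i 1 * M := by
  rw [std_eq_diag, ← h.diagonal_diag, diagonal_mul_diagonal, diagonal_mul_diagonal]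
  simp [mul_comm]

lemma isDiag_of_commute {M : Matrix (Fin (n+1)) (Fin (n+1)) F}
    (h : ∀ i, M * single i i 1 = single i i 1 * M) : M.IsDiag := by
  intro j k hjk
  have := congrArg (fun A => A j k) (h k)
  simp only [std_eq_diag, mul_diagonal, diagonal_mul, if_pos rfl, hjk, if_neg hjk,
    mul_one, zero_mul] at this
  simpa using this

end Helpers

section Helpers2
variable {F : Type} [Field F] {n : ℕ}

lemma conj_delta_of_isDiag {D : Matrix (Fin (n+1)) (Fin (n+1)) F} (hd : D.IsDiag)
    (hu : IsUnit D) (i : Fin (n+1)) :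
    D * single i i 1 * D⁻¹ = single i i 1 := by
  rw [commute_delta_of_isDiag hd, Matrix.mul_nonsing_inv_cancel_right _ _
    ((Matrix.isUnit_iff_isUnit_det D).1 hu)]

lemma comm_of_conj {M N : Matrix (Fin (n+1)) (Fin (n+1)) F} (hM : IsUnit M)
    (h : M * N * M⁻¹ = N) : M * N = N * M := by
  have h2 := congrArg (fun A => A * M) h
  simpa [Matrix.mul_assoc,
    Matrix.nonsing_inv_mul M ((Matrix.isUnit_iff_isUnit_det M).1 hM)] using h2

end Helpers2

theorem stmt7 {F : Type} [Field F] (d : ℕ)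
    (R S : Matrix (Fin (d+1)) (Fin (d+1)) F)
    (hR : Solid R) (hS : Solid S) :
    DiagEquiv R S ↔
      ∃ U : Matrix (Fin (d+1)) (Fin (d+1)) F, IsUnit U ∧
        ∀ i : Fin (d+1),
          U * single i i 1 * U⁻¹ = single i i 1 ∧
          U * (R * single i i 1 * R⁻¹) * U⁻¹ = S * single i i 1 * S⁻¹ := by
  have hRdet := (Matrix.isUnit_iff_isUnit_det R).1 hR.1
  have hSdet := (Matrix.isUnit_iff_isUnit_det S).1 hS.1
  constructor
  · rintro ⟨H, K, hHd, hHu, hKd, hKu, rfl⟩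
    refine ⟨H, hHu, fun i => ⟨conj_delta_of_isDiag hHd hHu i, ?_⟩⟩
    rw [Matrix.mul_inv_rev, Matrix.mul_inv_rev]
    have hK := conj_delta_of_isDiag hKd hKu i
    calc H * (R * single i i 1 * R⁻¹) * H⁻¹
        = H * (R * (K * single i i 1 * K⁻¹) * R⁻¹) * H⁻¹ := by rw [hK]
      _ = H * R * K * single i i 1 * (K⁻¹ * (R⁻¹ * H⁻¹)) := by
          simp only [Matrix.mul_assoc]
  · rintro ⟨U, hU, hprop⟩
    have hUdet := (Matrix.isUnit_iff_isUnit_det U).1 hU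
    set V : Matrix (Fin (d+1)) (Fin (d+1)) F := S⁻¹ * U * R with hVdef
    have hVu : IsUnit V := ((Matrix.isUnit_nonsing_inv_iff.2 hS.1).mul hU).mul hR.1
    have hVdet := (Matrix.isUnit_iff_isUnit_det V).1 hVu
    have hVinv : V⁻¹ = R⁻¹ * (U⁻¹ * S) := by
      rw [hVdef, Matrix.mul_inv_rev, Matrix.mul_inv_rev,
        Matrix.nonsing_inv_nonsing_inv S hSdet]
    have key : ∀ i : Fin (d+1), V * single i i 1 * V⁻¹ = single i i 1 := by
      intro i
      calc V * single i i 1 * V⁻¹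
          = S⁻¹ * (U * (R * single i i 1 * R⁻¹) * U⁻¹) * S := by
            rw [hVdef, hVinv]; simp only [Matrix.mul_assoc]
        _ = S⁻¹ * (S * single i i 1 * S⁻¹) * S := by rw [(hprop i).2]
        _ = single i i 1 := by
            rw [Matrix.mul_assoc S, Matrix.nonsing_inv_mul_cancel_left _ _ hSdet,
              Matrix.nonsing_inv_mul_cancel_right _ _ hSdet]
    have hUd : U.IsDiag := isDiag_of_commute (fun i => comm_of_conj hU (hprop i).1)
    have hVd : V.IsDiag := isDiag_of_commute (fun i => comm_of_conj hVu (key i))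
    have hVid : (V⁻¹).IsDiag := by
      rw [← hVd.diagonal_diag, Matrix.inv_diagonal]
      exact Matrix.isDiag_diagonal _
    refine ⟨U, V⁻¹, hUd, hU, hVid, Matrix.isUnit_nonsing_inv_iff.2 hVu, ?_⟩
    have hSV : S * V = U * R := by
      rw [hVdef, ← Matrix.mul_assoc, ← Matrix.mul_assoc,
        Matrix.mul_nonsing_inv _ hSdet, Matrix.one_mul]
    rw [← hSV, Matrix.mul_nonsing_inv_cancel_right _ _ hVdet]
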